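/- Let A be a commutative ring, B a commutative A-algebra, n a positive integer, and m a natural number. Let v ∈ B, let b_0, ..., b_{n-1} ∈ A, and set u = ∑_{i=0}^{n-1} b_i v^i. If the element v·u is m-integral over A, then u is (n·m)-integral over A. -/

import Mathlib

open Polynomial

open Matrix in
lemma key_integral_card {A B ι : Type*} [CommRing A] [CommRing B] [Algebra A B] [Fintype ι]
    [DecidableEq ι] [Nontrivial A] (b : ι → B) (u : B)
    (h1 : (1 : B) ∈ Submodule.span A (Set.range b))
    (hu : ∀ j, u * b j ∈ Submodule.span A (Set.range b)) :
    ∃ p : A[X], p.Monic ∧ p.natDegree = Fintype.card ι ∧ aeval u p = 0 := by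
  set S := Submodule.span A (Set.range b) with hS
  have hSmul : ∀ x ∈ S, u * x ∈ S := by
    intro x hx
    induction hx using Submodule.span_induction with
    | mem x hx => obtain ⟨j, rfl⟩ := hx; exact hu j
    | zero => simpa using S.zero_mem
    | add x y _ _ hx hy => rw [mul_add]; exact S.add_mem hx hy
    | smul a x _ hx => rw [Algebra.mul_smul_comm]; exact S.smul_mem a hx
  let f : Module.End A S := (LinearMap.mulLeft A u).restrict hSmul
  have hf : ∀ s : S, (f s : B) = u * (s : B) := fun s => rfl
  let b' : ι → S := fun i => ⟨b i, Submodule.subset_span ⟨i, rfl⟩⟩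
  have htop : Submodule.span A (Set.range b') = ⊤ := by
    apply Submodule.map_injective_of_injective S.injective_subtype
    rw [Submodule.map_span, Submodule.map_top, Submodule.range_subtype, ← Set.range_comp]
    exact hS.symm
  have hmem : ∀ j, ∃ c : ι → A, ∑ i, c i • b i = u * b j := fun j =>
    (Submodule.mem_span_range_iff_exists_fun A).mp (hu j)
  choose c hc using hmem
  let C : Matrix ι ι A := fun i j => c j i
  have hrep : C.Represents b' f := by
    rw [Matrix.represents_iff']
    intro j
    apply Subtype.ext
    show ((∑ i, C i j • b' i : S) : B) = u * b j
    rw [AddSubmonoidClass.coe_finset_sum]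
    simpa [C, b'] using hc j
  have h0 : Polynomial.aeval f C.charpoly = 0 := by
    have he := Matrix.isRepresentation.eq_toEnd_of_represents A b' htop ⟨C, f, hrep⟩ hrep
    rw [← he, Polynomial.aeval_algHom_apply, ← map_zero (Matrix.isRepresentation.toEnd A b' htop)]
    congr 1
    ext1
    rw [Polynomial.aeval_subalgebra_coe, Matrix.aeval_self_charpoly, Subalgebra.coe_zero]
  have hpow : ∀ (k : ℕ) (s : S), (((f ^ k) s : S) : B) = u ^ k * (s : B) := by
    intro k
    induction k with
    | zero => intro s; simp
    | succ k ih =>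
      intro s
      rw [pow_succ, Module.End.mul_apply, ih, hf, pow_succ]
      ring
  have hbridge : ∀ (p : A[X]) (s : S),
      ((Polynomial.aeval f p s : S) : B) = Polynomial.aeval u p * (s : B) := by
    intro p
    induction p using Polynomial.induction_on' with
    | add p q hp hq =>
      intro s
      simp only [map_add, LinearMap.add_apply, Submodule.coe_add, hp s, hq s, add_mul]
    | monomial k a =>
      intro s
      rw [Polynomial.aeval_monomial, Polynomial.aeval_monomial]
      have : (algebraMap A (Module.End A S)) a * f ^ k = a • (f ^ k) := by
        rw [Algebra.smul_def]
      rw [this, LinearMap.smul_apply, Submodule.coe_smul, hpow, Algebra.smul_def]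
      ring
  refine ⟨C.charpoly, C.charpoly_monic, C.charpoly_natDegree_eq_dim, ?_⟩
  have h2 := hbridge C.charpoly ⟨1, h1⟩
  rw [h0] at h2
  simpa using h2.symm

theorem stmt8 {A B : Type*} [CommRing A] [CommRing B] [Algebra A B] (n : ℕ) (hn : 0 < n)
    (m : ℕ) (v : B) (b : ℕ → A) (u : B)
    (hu : u = ∑ i ∈ Finset.range n, algebraMap A B (b i) * v ^ i)
    (hvu : ∃ P : A[X], P.Monic ∧ P.natDegree = m ∧ aeval (v * u) P = 0) :
    ∃ P : A[X], P.Monic ∧ P.natDegree = n * m ∧ aeval u P = 0 := by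
  classical
  obtain ⟨P, hPm, hPd, hP0⟩ := hvu
  rcases Nat.eq_zero_or_pos m with hm | hm
  · subst hm
    have hP1 : P = 1 := hPm.natDegree_eq_zero.mp hPd
    refine ⟨1, monic_one, by simp, ?_⟩
    rw [hP1] at hP0
    simpa using hP0
  · haveI : Nontrivial A := by
      by_contra h
      rw [not_nontrivial_iff_subsingleton] at h
      have hP : P = 0 := Subsingleton.elim _ _
      rw [hP, natDegree_zero] at hPd
      omega
    set w := v * u with hw
    -- the relation for w^m
    have hwm : w ^ m = -∑ l ∈ Finset.range m, P.coeff l • w ^ l := by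
      have h0 : (0 : B) = ∑ i ∈ Finset.range (m + 1), P.coeff i • w ^ i := by
        rw [← hPd, ← Polynomial.aeval_eq_sum_range, hP0]
      rw [Finset.sum_range_succ] at h0
      have hcm : P.coeff m = 1 := by rw [← hPd]; exact hPm.coeff_natDegree
      rw [hcm, one_smul] at h0
      linear_combination -h0
    -- powers of w lie in the span of w^l, l < m
    have hT : ∀ t, w ^ t ∈ Submodule.span A (Set.range fun l : Fin m => w ^ (l : ℕ)) := by
      intro t
      induction t using Nat.strong_induction_on with
      | _ t ih =>
        rcases lt_or_ge t m with h | h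
        · exact Submodule.subset_span ⟨⟨t, h⟩, rfl⟩
        · have ht : w ^ t = w ^ (t - m) * w ^ m := by rw [← pow_add]; congr 1; omega
          rw [ht, hwm, mul_neg, Finset.mul_sum]
          apply Submodule.neg_mem
          apply Submodule.sum_mem
          intro l hl
          simp only [Finset.mem_range] at hl
          have he : w ^ (t - m) * (P.coeff l • w ^ l) = P.coeff l • w ^ (t - m + l) := by
            rw [pow_add, Algebra.smul_def, Algebra.smul_def]; ring
          rw [he]
          exact Submodule.smul_mem _ _ (ih _ (by omega))
    -- the generating family
    set g : Fin n × Fin m → B := fun p => w ^ (p.2 : ℕ) * u ^ (p.1 : ℕ) with hg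
    set S := Submodule.span A (Set.range g) with hSdef
    have hmulS : ∀ c : Fin n, ∀ x ∈ Submodule.span A (Set.range fun l : Fin m => w ^ (l : ℕ)),
        x * u ^ (c : ℕ) ∈ S := by
      intro c x hx
      induction hx using Submodule.span_induction with
      | mem x hx =>
        obtain ⟨l, rfl⟩ := hx
        exact Submodule.subset_span ⟨(c, l), rfl⟩
      | zero => simpa using S.zero_mem
      | add x y _ _ hx hy => rw [add_mul]; exact S.add_mem hx hy
      | smul a x _ hx => rw [smul_mul_assoc]; exact S.smul_mem a hx
    -- the key identity for u^n
    have hun : u ^ n = ∑ i ∈ Finset.range n,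
        algebraMap A B (b i) * (w ^ i * u ^ (n - 1 - i)) := by
      have e1 : u ^ n = u * u ^ (n - 1) := by rw [← pow_succ']; congr 1; omega
      calc u ^ n = (∑ i ∈ Finset.range n, algebraMap A B (b i) * v ^ i) * u ^ (n - 1) := by
            rw [← hu, ← e1]
        _ = ∑ i ∈ Finset.range n, algebraMap A B (b i) * (w ^ i * u ^ (n - 1 - i)) := by
            rw [Finset.sum_mul]
            apply Finset.sum_congr rfl
            intro i hi
            simp only [Finset.mem_range] at hi
            have e2 : u ^ (n - 1) = u ^ i * u ^ (n - 1 - i) := by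
              rw [← pow_add]; congr 1; omega
            rw [e2, hw, mul_pow]
            ring
    have h1 : (1 : B) ∈ S := by
      have : (1 : B) = g (⟨0, hn⟩, ⟨0, hm⟩) := by simp [hg]
      rw [this]; exact Submodule.subset_span ⟨_, rfl⟩
    have hgen : ∀ j : Fin n × Fin m, u * g j ∈ S := by
      rintro ⟨k, j⟩
      show u * (w ^ (j : ℕ) * u ^ (k : ℕ)) ∈ S
      rcases lt_or_ge ((k : ℕ) + 1) n with h | h
      · have he : u * (w ^ (j : ℕ) * u ^ (k : ℕ)) = g (⟨(k : ℕ) + 1, h⟩, j) := by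
          simp only [hg, pow_succ]; ring
        rw [he]; exact Submodule.subset_span ⟨_, rfl⟩
      · have hk : (k : ℕ) + 1 = n := by omega
        have he : u * (w ^ (j : ℕ) * u ^ (k : ℕ)) = w ^ (j : ℕ) * u ^ n := by
          have e : u ^ n = u ^ ((k : ℕ) + 1) := by rw [hk]
          rw [e, pow_succ]; ring
        rw [he, hun, Finset.mul_sum]
        apply Submodule.sum_mem
        intro i hi
        simp only [Finset.mem_range] at hi
        have he2 : w ^ (j : ℕ) * (algebraMap A B (b i) * (w ^ i * u ^ (n - 1 - i)))
            = b i • (w ^ ((j : ℕ) + i) * u ^ (n - 1 - i)) := by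
          rw [pow_add, Algebra.smul_def]; ring
        rw [he2]
        exact Submodule.smul_mem _ _
          (hmulS ⟨n - 1 - i, by omega⟩ _ (hT ((j : ℕ) + i)))
    obtain ⟨p, hpm, hpd, hp0⟩ := key_integral_card g u h1 hgen
    exact ⟨p, hpm, by simpa using hpd, hp0⟩
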